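/- Define the random variable C by C := D1·D2 if (A, B) ≠ (a′, b) and C := −D1·D2 if (A, B) = (a′, b). Under assumptions (E1) and (E2*), and the locality assumption (LOC) together with (E3), one has P(C = +1) ≤ 3/4, or equivalently E(C) ≤ 1/2. -/

import Mathlib

open MeasureTheory ProbabilityTheory
open scoped ENNReal

/-- Conditional probability of the event `E` given the sub-σ-algebra `m`:
the conditional expectation of the indicator function of `E`. -/
noncomputable def cprob {Ω : Type*} [MeasurableSpace Ω] (P : Measure Ω)
    (m : MeasurableSpace Ω) (E : Set Ω) : Ω → ℝ :=
  P[E.indicator (fun _ => (1 : ℝ)) | m]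

lemma probX {Ω : Type*} [MeasurableSpace Ω] (P : Measure Ω) [IsProbabilityMeasure P]
    (X : Ω → Bool) (hX : Measurable X) (hX2 : P {ω | X ω = true} = 1/2) (x : Bool) :
    P {ω' | X ω' = x} = 1/2 := by
  cases x with
  | true => exact hX2
  | false =>
    have hs : MeasurableSet {ω' | X ω' = true} := by
      have : {ω' | X ω' = true} = X ⁻¹' {true} := by ext ω; simp
      rw [this]; exact hX (measurableSet_singleton true)
    have hc : {ω' | X ω' = false} = {ω' | X ω' = true}ᶜ := by ext ω; simp
    rw [hc, prob_compl_eq_one_sub hs, hX2]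
    exact ENNReal.sub_half (by norm_num)

lemma side_facts {Ω : Type*} [MeasurableSpace Ω] (P : Measure Ω) [IsProbabilityMeasure P]
    {Λ : Type*} [MeasurableSpace Λ] (lam : Ω → Λ) (hlam : Measurable lam)
    (D : Ω → ℝ) (X : Ω → Bool) (hD : Measurable D) (hX : Measurable X)
    (hDv : ∀ ω, D ω = 1 ∨ D ω = -1) (hind : IndepFun X lam P)
    (hX2 : P {ω | X ω = true} = 1/2) (x : Bool) :
    ∀ᵐ ω ∂P, 0 ≤ cprob P (MeasurableSpace.comap lam inferInstance) {ω' | D ω' = 1 ∧ X ω' = x} ω ∧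
      0 ≤ cprob P (MeasurableSpace.comap lam inferInstance) {ω' | D ω' = -1 ∧ X ω' = x} ω ∧
      cprob P (MeasurableSpace.comap lam inferInstance) {ω' | D ω' = 1 ∧ X ω' = x} ω +
        cprob P (MeasurableSpace.comap lam inferInstance) {ω' | D ω' = -1 ∧ X ω' = x} ω = 1/2 := by
  have hm : MeasurableSpace.comap lam inferInstance ≤ _ := hlam.comap_le
  have hS : ∀ s : ℝ, MeasurableSet {ω' | D ω' = s ∧ X ω' = x} := fun s => by
    have : {ω' | D ω' = s ∧ X ω' = x} = D ⁻¹' {s} ∩ X ⁻¹' {x} := by ext ω; simp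
    rw [this]; exact (hD (measurableSet_singleton s)).inter (hX (measurableSet_singleton x))
  have hSx : MeasurableSet {ω' | X ω' = x} := by
    have : {ω' | X ω' = x} = X ⁻¹' {x} := by ext ω; simp
    rw [this]; exact hX (measurableSet_singleton x)
  have hint : ∀ s : ℝ, Integrable ({ω' | D ω' = s ∧ X ω' = x}.indicator (fun _ => (1:ℝ))) P :=
    fun s => (integrable_const 1).indicator (hS s)
  have hadd : ({ω' | D ω' = 1 ∧ X ω' = x}.indicator (fun _ => (1:ℝ))) +
      ({ω' | D ω' = -1 ∧ X ω' = x}.indicator (fun _ => (1:ℝ))) =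
      ({ω' | X ω' = x}.indicator (fun _ => (1:ℝ))) := by
    funext ω
    rcases hDv ω with h | h <;> by_cases hx : X ω = x <;>
      simp [Set.indicator_apply, h, hx] <;> norm_num
  have h1 : cprob P (MeasurableSpace.comap lam inferInstance) {ω' | D ω' = 1 ∧ X ω' = x} +
      cprob P (MeasurableSpace.comap lam inferInstance) {ω' | D ω' = -1 ∧ X ω' = x}
      =ᵐ[P] P[{ω' | X ω' = x}.indicator (fun _ => (1:ℝ)) | MeasurableSpace.comap lam inferInstance] := by
    refine (condExp_add (hint 1) (hint (-1)) _).symm.trans ?_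
    rw [hadd]
  have hindep : Indep (MeasurableSpace.comap X inferInstance)
      (MeasurableSpace.comap lam inferInstance) P := (IndepFun_iff_Indep _ _ _).1 hind
  have hmeasX : StronglyMeasurable[MeasurableSpace.comap X inferInstance]
      ({ω' | X ω' = x}.indicator (fun _ => (1:ℝ))) := by
    refine stronglyMeasurable_const.indicator ⟨{x}, measurableSet_singleton x, ?_⟩
    ext ω; simp
  have h2 : P[{ω' | X ω' = x}.indicator (fun _ => (1:ℝ)) | MeasurableSpace.comap lam inferInstance]
      =ᵐ[P] fun _ => ∫ ω, {ω' | X ω' = x}.indicator (fun _ => (1:ℝ)) ω ∂P :=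
    condExp_indep_eq hX.comap_le hm hmeasX hindep
  have hIx : ∫ ω, {ω' | X ω' = x}.indicator (fun _ => (1:ℝ)) ω ∂P = 1/2 := by
    rw [integral_indicator_const _ hSx, measureReal_def, probX P X hX hX2 x]
    simp [ENNReal.toReal_div]
  have h3 : cprob P (MeasurableSpace.comap lam inferInstance) {ω' | D ω' = 1 ∧ X ω' = x} +
      cprob P (MeasurableSpace.comap lam inferInstance) {ω' | D ω' = -1 ∧ X ω' = x}
      =ᵐ[P] fun _ => (1/2 : ℝ) := by
    refine h1.trans (h2.trans ?_)
    rw [hIx]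
  have hnn : ∀ s : ℝ, 0 ≤ᵐ[P] cprob P (MeasurableSpace.comap lam inferInstance) {ω' | D ω' = s ∧ X ω' = x} :=
    fun s => condExp_nonneg (ae_of_all _ fun ω => Set.indicator_nonneg (fun _ _ => zero_le_one) ω)
  filter_upwards [h3, hnn 1, hnn (-1)] with ω h3 hn1 hn2
  exact ⟨hn1, hn2, h3⟩

lemma chsh_core (u1 u2 v1 v2 : ℝ)
    (hu1l : -(1/2) ≤ u1) (hu1u : u1 ≤ 1/2) (hu2l : -(1/2) ≤ u2) (hu2u : u2 ≤ 1/2)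
    (hv1l : -(1/2) ≤ v1) (hv1u : v1 ≤ 1/2) (hv2l : -(1/2) ≤ v2) (hv2u : v2 ≤ 1/2) :
    u1*v1 + u1*v2 - u2*v1 + u2*v2 ≤ 1/2 := by
  rcases le_total 0 (v1 + v2) with hp | hp <;> rcases le_total 0 (v2 - v1) with hq | hq
  · nlinarith [mul_nonneg (by linarith : (0:ℝ) ≤ 1/2 - u1) hp,
      mul_nonneg (by linarith : (0:ℝ) ≤ 1/2 - u2) hq]
  · nlinarith [mul_nonneg (by linarith : (0:ℝ) ≤ 1/2 - u1) hp,
      mul_nonneg (by linarith : (0:ℝ) ≤ 1/2 + u2) (by linarith : (0:ℝ) ≤ v1 - v2)]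
  · nlinarith [mul_nonneg (by linarith : (0:ℝ) ≤ 1/2 + u1) (by linarith : (0:ℝ) ≤ -(v1+v2)),
      mul_nonneg (by linarith : (0:ℝ) ≤ 1/2 - u2) hq]
  · nlinarith [mul_nonneg (by linarith : (0:ℝ) ≤ 1/2 + u1) (by linarith : (0:ℝ) ≤ -(v1+v2)),
      mul_nonneg (by linarith : (0:ℝ) ≤ 1/2 + u2) (by linarith : (0:ℝ) ≤ v1 - v2)]

lemma integral_comb {Ω : Type*} [MeasurableSpace Ω] (μ : Measure Ω)
    (c1 c2 c3 c4 : ℝ) (f1 f2 f3 f4 : Ω → ℝ)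
    (h1 : Integrable f1 μ) (h2 : Integrable f2 μ) (h3 : Integrable f3 μ) (h4 : Integrable f4 μ) :
    ∫ ω, (c1 * f1 ω + c2 * f2 ω + c3 * f3 ω + c4 * f4 ω) ∂μ =
      c1 * ∫ ω, f1 ω ∂μ + c2 * ∫ ω, f2 ω ∂μ + c3 * ∫ ω, f3 ω ∂μ + c4 * ∫ ω, f4 ω ∂μ := by
  have g1 : Integrable (fun ω => c1 * f1 ω) μ := h1.const_mul c1
  have g2 : Integrable (fun ω => c2 * f2 ω) μ := h2.const_mul c2
  have g3 : Integrable (fun ω => c3 * f3 ω) μ := h3.const_mul c3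
  have g4 : Integrable (fun ω => c4 * f4 ω) μ := h4.const_mul c4
  have g12 : Integrable (fun ω => c1 * f1 ω + c2 * f2 ω) μ := g1.add g2
  have g123 : Integrable (fun ω => c1 * f1 ω + c2 * f2 ω + c3 * f3 ω) μ := g12.add g3
  rw [integral_add g123 g4, integral_add g12 g3, integral_add g1 g2,
    integral_const_mul, integral_const_mul, integral_const_mul, integral_const_mul]

set_option maxHeartbeats 2000000 in
theorem stmt7 {Ω : Type*} [MeasurableSpace Ω] (P : Measure Ω) [IsProbabilityMeasure P]
    {Λ : Type*} [MeasurableSpace Λ] (lam : Ω → Λ) (hlam : Measurable lam)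
    (A B : Ω → Bool) (hA : Measurable A) (hB : Measurable B)
    (D1 D2 : Ω → ℝ) (hD1 : Measurable D1) (hD2 : Measurable D2)
    (hD1v : ∀ ω, D1 ω = 1 ∨ D1 ω = -1) (hD2v : ∀ ω, D2 ω = 1 ∨ D2 ω = -1)
    (hE1 : IndepFun A B P)
    (hE2 : P {ω | A ω = true} = 1/2 ∧ P {ω | B ω = true} = 1/2)
    (hE3 : IndepFun A lam P ∧ IndepFun B lam P)
    (hLOC : ∀ E1 E2 : Set Ω,
      MeasurableSet[MeasurableSpace.comap (fun ω => (D1 ω, A ω)) inferInstance] E1 →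
      MeasurableSet[MeasurableSpace.comap (fun ω => (D2 ω, B ω)) inferInstance] E2 →
      cprob P (MeasurableSpace.comap lam inferInstance) (E1 ∩ E2) =ᵐ[P]
        fun ω => cprob P (MeasurableSpace.comap lam inferInstance) E1 ω *
          cprob P (MeasurableSpace.comap lam inferInstance) E2 ω)
    (C : Ω → ℝ)
    (hC : ∀ ω, C ω = if A ω = false ∧ B ω = true
        then -(D1 ω * D2 ω) else D1 ω * D2 ω) :
    P {ω | C ω = 1} ≤ 3/4 ∧ ∫ ω, C ω ∂P ≤ 1/2 := by
  have hm : MeasurableSpace.comap lam inferInstance ≤ _ := hlam.comap_le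
  -- basic sets and their measurability
  have hms1 : ∀ (s : ℝ) (x : Bool), MeasurableSet {ω | D1 ω = s ∧ A ω = x} := fun s x => by
    have : {ω | D1 ω = s ∧ A ω = x} = D1 ⁻¹' {s} ∩ A ⁻¹' {x} := by ext ω; simp
    rw [this]; exact (hD1 (measurableSet_singleton s)).inter (hA (measurableSet_singleton x))
  have hms2 : ∀ (t : ℝ) (y : Bool), MeasurableSet {ω | D2 ω = t ∧ B ω = y} := fun t y => by
    have : {ω | D2 ω = t ∧ B ω = y} = D2 ⁻¹' {t} ∩ B ⁻¹' {y} := by ext ω; simp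
    rw [this]; exact (hD2 (measurableSet_singleton t)).inter (hB (measurableSet_singleton y))
  have hmem1 : ∀ (s : ℝ) (x : Bool),
      MeasurableSet[MeasurableSpace.comap (fun ω => (D1 ω, A ω)) inferInstance]
        {ω | D1 ω = s ∧ A ω = x} := fun s x =>
    ⟨{s} ×ˢ {x}, (measurableSet_singleton s).prod (measurableSet_singleton x), by ext ω; simp⟩
  have hmem2 : ∀ (t : ℝ) (y : Bool),
      MeasurableSet[MeasurableSpace.comap (fun ω => (D2 ω, B ω)) inferInstance]
        {ω | D2 ω = t ∧ B ω = y} := fun t y =>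
    ⟨{t} ×ˢ {y}, (measurableSet_singleton t).prod (measurableSet_singleton y), by ext ω; simp⟩
  -- conditional probabilities
  set p : ℝ → Bool → Ω → ℝ :=
    fun s x => cprob P (MeasurableSpace.comap lam inferInstance) {ω | D1 ω = s ∧ A ω = x} with hpdef
  set q : ℝ → Bool → Ω → ℝ :=
    fun t y => cprob P (MeasurableSpace.comap lam inferInstance) {ω | D2 ω = t ∧ B ω = y} with hqdef
  have hfacts1 : ∀ x : Bool, ∀ᵐ ω ∂P, 0 ≤ p 1 x ω ∧ 0 ≤ p (-1) x ω ∧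
      p 1 x ω + p (-1) x ω = 1/2 := fun x => by
    simpa [hpdef] using side_facts P lam hlam D1 A hD1 hA hD1v hE3.1 hE2.1 x
  have hfacts2 : ∀ y : Bool, ∀ᵐ ω ∂P, 0 ≤ q 1 y ω ∧ 0 ≤ q (-1) y ω ∧
      q 1 y ω + q (-1) y ω = 1/2 := fun y => by
    simpa [hqdef] using side_facts P lam hlam D2 B hD2 hB hD2v hE3.2 hE2.2 y
  -- strong measurability of p, q
  have hpm : ∀ (s : ℝ) (x : Bool), StronglyMeasurable (p s x) := fun s x =>
    stronglyMeasurable_condExp.mono hm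
  have hqm : ∀ (t : ℝ) (y : Bool), StronglyMeasurable (q t y) := fun t y =>
    stronglyMeasurable_condExp.mono hm
  -- integrability of products p*q
  have hpq_int : ∀ (s t : ℝ) (x y : Bool), (s = 1 ∨ s = -1) → (t = 1 ∨ t = -1) →
      Integrable (fun ω => p s x ω * q t y ω) P := by
    intro s t x y hs ht
    refine Integrable.mono' (integrable_const (1 : ℝ))
      ((hpm s x).mul (hqm t y)).aestronglyMeasurable ?_
    filter_upwards [hfacts1 x, hfacts2 y] with ω h1 h2
    obtain ⟨hp1, hpm1, hps⟩ := h1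
    obtain ⟨hq1, hqm1, hqs⟩ := h2
    have hsb : |p s x ω| ≤ 1 := by
      rcases hs with h | h <;> rw [h] <;> rw [abs_le] <;> constructor <;> linarith
    have htb : |q t y ω| ≤ 1 := by
      rcases ht with h | h <;> rw [h] <;> rw [abs_le] <;> constructor <;> linarith
    calc ‖p s x ω * q t y ω‖ = |p s x ω| * |q t y ω| := abs_mul _ _
      _ ≤ 1 * 1 := mul_le_mul hsb htb (abs_nonneg _) zero_le_one
      _ = 1 := by norm_num
  -- key step: integral of indicator of intersection equals integral of product
  have hI : ∀ (s t : ℝ) (x y : Bool),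
      ∫ ω, ({ω' | D1 ω' = s ∧ A ω' = x} ∩ {ω' | D2 ω' = t ∧ B ω' = y}).indicator
          (fun _ => (1:ℝ)) ω ∂P = ∫ ω, p s x ω * q t y ω ∂P := by
    intro s t x y
    rw [← integral_condExp (μ := P)
      (f := ({ω' | D1 ω' = s ∧ A ω' = x} ∩ {ω' | D2 ω' = t ∧ B ω' = y}).indicator
          (fun _ => (1:ℝ))) hm]
    exact integral_congr_ae (hLOC _ _ (hmem1 s x) (hmem2 t y))
  -- integrability of indicators of intersections
  have hind_int : ∀ (s t : ℝ) (x y : Bool),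
      Integrable (({ω' | D1 ω' = s ∧ A ω' = x} ∩ {ω' | D2 ω' = t ∧ B ω' = y}).indicator
          (fun _ => (1:ℝ))) P := fun s t x y =>
    (integrable_const 1).indicator ((hms1 s x).inter (hms2 t y))
  -- block identity
  have hblock : ∀ (x y : Bool), ∫ ω,
      (({ω' | D1 ω' = 1 ∧ A ω' = x} ∩ {ω' | D2 ω' = 1 ∧ B ω' = y}).indicator (fun _ => (1:ℝ)) ω
       - ({ω' | D1 ω' = 1 ∧ A ω' = x} ∩ {ω' | D2 ω' = -1 ∧ B ω' = y}).indicator (fun _ => (1:ℝ)) ω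
       - ({ω' | D1 ω' = -1 ∧ A ω' = x} ∩ {ω' | D2 ω' = 1 ∧ B ω' = y}).indicator (fun _ => (1:ℝ)) ω
       + ({ω' | D1 ω' = -1 ∧ A ω' = x} ∩ {ω' | D2 ω' = -1 ∧ B ω' = y}).indicator (fun _ => (1:ℝ)) ω) ∂P
      = ∫ ω, (p 1 x ω - p (-1) x ω) * (q 1 y ω - q (-1) y ω) ∂P := by
    intro x y
    have e1 : ∫ ω,
        (({ω' | D1 ω' = 1 ∧ A ω' = x} ∩ {ω' | D2 ω' = 1 ∧ B ω' = y}).indicator (fun _ => (1:ℝ)) ω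
         - ({ω' | D1 ω' = 1 ∧ A ω' = x} ∩ {ω' | D2 ω' = -1 ∧ B ω' = y}).indicator (fun _ => (1:ℝ)) ω
         - ({ω' | D1 ω' = -1 ∧ A ω' = x} ∩ {ω' | D2 ω' = 1 ∧ B ω' = y}).indicator (fun _ => (1:ℝ)) ω
         + ({ω' | D1 ω' = -1 ∧ A ω' = x} ∩ {ω' | D2 ω' = -1 ∧ B ω' = y}).indicator (fun _ => (1:ℝ)) ω) ∂P
        = ∫ ω,
        ((1:ℝ) * ({ω' | D1 ω' = 1 ∧ A ω' = x} ∩ {ω' | D2 ω' = 1 ∧ B ω' = y}).indicator (fun _ => (1:ℝ)) ω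
         + (-1) * ({ω' | D1 ω' = 1 ∧ A ω' = x} ∩ {ω' | D2 ω' = -1 ∧ B ω' = y}).indicator (fun _ => (1:ℝ)) ω
         + (-1) * ({ω' | D1 ω' = -1 ∧ A ω' = x} ∩ {ω' | D2 ω' = 1 ∧ B ω' = y}).indicator (fun _ => (1:ℝ)) ω
         + (1:ℝ) * ({ω' | D1 ω' = -1 ∧ A ω' = x} ∩ {ω' | D2 ω' = -1 ∧ B ω' = y}).indicator (fun _ => (1:ℝ)) ω) ∂P := by
      refine integral_congr_ae (ae_of_all _ fun ω => ?_)
      ring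
    have e2 : ∫ ω, (p 1 x ω - p (-1) x ω) * (q 1 y ω - q (-1) y ω) ∂P
        = ∫ ω, ((1:ℝ) * (p 1 x ω * q 1 y ω) + (-1) * (p 1 x ω * q (-1) y ω)
            + (-1) * (p (-1) x ω * q 1 y ω) + (1:ℝ) * (p (-1) x ω * q (-1) y ω)) ∂P := by
      refine integral_congr_ae (ae_of_all _ fun ω => ?_)
      ring
    rw [e1, e2,
      integral_comb P 1 (-1) (-1) 1 _ _ _ _ (hind_int 1 1 x y) (hind_int 1 (-1) x y)
        (hind_int (-1) 1 x y) (hind_int (-1) (-1) x y),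
      integral_comb P 1 (-1) (-1) 1 _ _ _ _
        (hpq_int 1 1 x y (Or.inl rfl) (Or.inl rfl)) (hpq_int 1 (-1) x y (Or.inl rfl) (Or.inr rfl))
        (hpq_int (-1) 1 x y (Or.inr rfl) (Or.inl rfl)) (hpq_int (-1) (-1) x y (Or.inr rfl) (Or.inr rfl)),
      hI 1 1 x y, hI 1 (-1) x y, hI (-1) 1 x y, hI (-1) (-1) x y]
  -- block function integrability
  have hbl_int : ∀ x y : Bool, Integrable (fun ω =>
      ({ω' | D1 ω' = 1 ∧ A ω' = x} ∩ {ω' | D2 ω' = 1 ∧ B ω' = y}).indicator (fun _ => (1:ℝ)) ω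
      - ({ω' | D1 ω' = 1 ∧ A ω' = x} ∩ {ω' | D2 ω' = -1 ∧ B ω' = y}).indicator (fun _ => (1:ℝ)) ω
      - ({ω' | D1 ω' = -1 ∧ A ω' = x} ∩ {ω' | D2 ω' = 1 ∧ B ω' = y}).indicator (fun _ => (1:ℝ)) ω
      + ({ω' | D1 ω' = -1 ∧ A ω' = x} ∩ {ω' | D2 ω' = -1 ∧ B ω' = y}).indicator (fun _ => (1:ℝ)) ω) P :=
    fun x y => (((hind_int 1 1 x y).sub (hind_int 1 (-1) x y)).sub (hind_int (-1) 1 x y)).add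
      (hind_int (-1) (-1) x y)
  -- pointwise decomposition of C into the four blocks
  have hCfun : ∀ ω, C ω =
      (({ω' | D1 ω' = 1 ∧ A ω' = true} ∩ {ω' | D2 ω' = 1 ∧ B ω' = true}).indicator (fun _ => (1:ℝ)) ω
      - ({ω' | D1 ω' = 1 ∧ A ω' = true} ∩ {ω' | D2 ω' = -1 ∧ B ω' = true}).indicator (fun _ => (1:ℝ)) ω
      - ({ω' | D1 ω' = -1 ∧ A ω' = true} ∩ {ω' | D2 ω' = 1 ∧ B ω' = true}).indicator (fun _ => (1:ℝ)) ω
      + ({ω' | D1 ω' = -1 ∧ A ω' = true} ∩ {ω' | D2 ω' = -1 ∧ B ω' = true}).indicator (fun _ => (1:ℝ)) ω)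
      + (({ω' | D1 ω' = 1 ∧ A ω' = true} ∩ {ω' | D2 ω' = 1 ∧ B ω' = false}).indicator (fun _ => (1:ℝ)) ω
      - ({ω' | D1 ω' = 1 ∧ A ω' = true} ∩ {ω' | D2 ω' = -1 ∧ B ω' = false}).indicator (fun _ => (1:ℝ)) ω
      - ({ω' | D1 ω' = -1 ∧ A ω' = true} ∩ {ω' | D2 ω' = 1 ∧ B ω' = false}).indicator (fun _ => (1:ℝ)) ω
      + ({ω' | D1 ω' = -1 ∧ A ω' = true} ∩ {ω' | D2 ω' = -1 ∧ B ω' = false}).indicator (fun _ => (1:ℝ)) ω)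
      - (({ω' | D1 ω' = 1 ∧ A ω' = false} ∩ {ω' | D2 ω' = 1 ∧ B ω' = true}).indicator (fun _ => (1:ℝ)) ω
      - ({ω' | D1 ω' = 1 ∧ A ω' = false} ∩ {ω' | D2 ω' = -1 ∧ B ω' = true}).indicator (fun _ => (1:ℝ)) ω
      - ({ω' | D1 ω' = -1 ∧ A ω' = false} ∩ {ω' | D2 ω' = 1 ∧ B ω' = true}).indicator (fun _ => (1:ℝ)) ω
      + ({ω' | D1 ω' = -1 ∧ A ω' = false} ∩ {ω' | D2 ω' = -1 ∧ B ω' = true}).indicator (fun _ => (1:ℝ)) ω)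
      + (({ω' | D1 ω' = 1 ∧ A ω' = false} ∩ {ω' | D2 ω' = 1 ∧ B ω' = false}).indicator (fun _ => (1:ℝ)) ω
      - ({ω' | D1 ω' = 1 ∧ A ω' = false} ∩ {ω' | D2 ω' = -1 ∧ B ω' = false}).indicator (fun _ => (1:ℝ)) ω
      - ({ω' | D1 ω' = -1 ∧ A ω' = false} ∩ {ω' | D2 ω' = 1 ∧ B ω' = false}).indicator (fun _ => (1:ℝ)) ω
      + ({ω' | D1 ω' = -1 ∧ A ω' = false} ∩ {ω' | D2 ω' = -1 ∧ B ω' = false}).indicator (fun _ => (1:ℝ)) ω) := by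
    intro ω
    rcases hD1v ω with h1 | h1 <;> rcases hD2v ω with h2 | h2 <;>
      cases hA' : A ω <;> cases hB' : B ω <;>
      simp only [hC, Set.indicator_apply, Set.mem_inter_iff, Set.mem_setOf_eq, h1, h2, hA', hB'] <;>
      norm_num
  -- integrability of products of differences
  have hf_int : ∀ x y : Bool,
      Integrable (fun ω => (p 1 x ω - p (-1) x ω) * (q 1 y ω - q (-1) y ω)) P := by
    intro x y
    have h0 : Integrable (fun ω => p 1 x ω * q 1 y ω - p 1 x ω * q (-1) y ω
        - p (-1) x ω * q 1 y ω + p (-1) x ω * q (-1) y ω) P :=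
      (((hpq_int 1 1 x y (Or.inl rfl) (Or.inl rfl)).sub
        (hpq_int 1 (-1) x y (Or.inl rfl) (Or.inr rfl))).sub
        (hpq_int (-1) 1 x y (Or.inr rfl) (Or.inl rfl))).add
        (hpq_int (-1) (-1) x y (Or.inr rfl) (Or.inr rfl))
    exact h0.congr (ae_of_all _ fun ω => by ring)
  -- the integral of C equals the integral of the CHSH combination
  have hsplit : ∫ ω, C ω ∂P = ∫ ω,
      ((1:ℝ) * ((p 1 true ω - p (-1) true ω) * (q 1 true ω - q (-1) true ω))
      + (1:ℝ) * ((p 1 true ω - p (-1) true ω) * (q 1 false ω - q (-1) false ω))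
      + (-1:ℝ) * ((p 1 false ω - p (-1) false ω) * (q 1 true ω - q (-1) true ω))
      + (1:ℝ) * ((p 1 false ω - p (-1) false ω) * (q 1 false ω - q (-1) false ω))) ∂P := by
    calc ∫ ω, C ω ∂P = ∫ ω,
        ((1:ℝ) * (({ω' | D1 ω' = 1 ∧ A ω' = true} ∩ {ω' | D2 ω' = 1 ∧ B ω' = true}).indicator (fun _ => (1:ℝ)) ω
          - ({ω' | D1 ω' = 1 ∧ A ω' = true} ∩ {ω' | D2 ω' = -1 ∧ B ω' = true}).indicator (fun _ => (1:ℝ)) ω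
          - ({ω' | D1 ω' = -1 ∧ A ω' = true} ∩ {ω' | D2 ω' = 1 ∧ B ω' = true}).indicator (fun _ => (1:ℝ)) ω
          + ({ω' | D1 ω' = -1 ∧ A ω' = true} ∩ {ω' | D2 ω' = -1 ∧ B ω' = true}).indicator (fun _ => (1:ℝ)) ω)
        + (1:ℝ) * (({ω' | D1 ω' = 1 ∧ A ω' = true} ∩ {ω' | D2 ω' = 1 ∧ B ω' = false}).indicator (fun _ => (1:ℝ)) ω
          - ({ω' | D1 ω' = 1 ∧ A ω' = true} ∩ {ω' | D2 ω' = -1 ∧ B ω' = false}).indicator (fun _ => (1:ℝ)) ω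
          - ({ω' | D1 ω' = -1 ∧ A ω' = true} ∩ {ω' | D2 ω' = 1 ∧ B ω' = false}).indicator (fun _ => (1:ℝ)) ω
          + ({ω' | D1 ω' = -1 ∧ A ω' = true} ∩ {ω' | D2 ω' = -1 ∧ B ω' = false}).indicator (fun _ => (1:ℝ)) ω)
        + (-1:ℝ) * (({ω' | D1 ω' = 1 ∧ A ω' = false} ∩ {ω' | D2 ω' = 1 ∧ B ω' = true}).indicator (fun _ => (1:ℝ)) ω
          - ({ω' | D1 ω' = 1 ∧ A ω' = false} ∩ {ω' | D2 ω' = -1 ∧ B ω' = true}).indicator (fun _ => (1:ℝ)) ω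
          - ({ω' | D1 ω' = -1 ∧ A ω' = false} ∩ {ω' | D2 ω' = 1 ∧ B ω' = true}).indicator (fun _ => (1:ℝ)) ω
          + ({ω' | D1 ω' = -1 ∧ A ω' = false} ∩ {ω' | D2 ω' = -1 ∧ B ω' = true}).indicator (fun _ => (1:ℝ)) ω)
        + (1:ℝ) * (({ω' | D1 ω' = 1 ∧ A ω' = false} ∩ {ω' | D2 ω' = 1 ∧ B ω' = false}).indicator (fun _ => (1:ℝ)) ω
          - ({ω' | D1 ω' = 1 ∧ A ω' = false} ∩ {ω' | D2 ω' = -1 ∧ B ω' = false}).indicator (fun _ => (1:ℝ)) ω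
          - ({ω' | D1 ω' = -1 ∧ A ω' = false} ∩ {ω' | D2 ω' = 1 ∧ B ω' = false}).indicator (fun _ => (1:ℝ)) ω
          + ({ω' | D1 ω' = -1 ∧ A ω' = false} ∩ {ω' | D2 ω' = -1 ∧ B ω' = false}).indicator (fun _ => (1:ℝ)) ω)) ∂P := by
          refine integral_congr_ae (ae_of_all _ fun ω => ?_)
          rw [hCfun ω]; ring
      _ = 1 * (∫ ω, (p 1 true ω - p (-1) true ω) * (q 1 true ω - q (-1) true ω) ∂P)
          + 1 * (∫ ω, (p 1 true ω - p (-1) true ω) * (q 1 false ω - q (-1) false ω) ∂P)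
          + (-1) * (∫ ω, (p 1 false ω - p (-1) false ω) * (q 1 true ω - q (-1) true ω) ∂P)
          + 1 * (∫ ω, (p 1 false ω - p (-1) false ω) * (q 1 false ω - q (-1) false ω) ∂P) := by
          rw [integral_comb P 1 1 (-1) 1 _ _ _ _ (hbl_int true true) (hbl_int true false)
            (hbl_int false true) (hbl_int false false),
            hblock true true, hblock true false, hblock false true, hblock false false]
      _ = ∫ ω, ((1:ℝ) * ((p 1 true ω - p (-1) true ω) * (q 1 true ω - q (-1) true ω))
          + (1:ℝ) * ((p 1 true ω - p (-1) true ω) * (q 1 false ω - q (-1) false ω))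
          + (-1:ℝ) * ((p 1 false ω - p (-1) false ω) * (q 1 true ω - q (-1) true ω))
          + (1:ℝ) * ((p 1 false ω - p (-1) false ω) * (q 1 false ω - q (-1) false ω))) ∂P := by
          rw [integral_comb P 1 1 (-1) 1 _ _ _ _ (hf_int true true) (hf_int true false)
            (hf_int false true) (hf_int false false)]
  -- a.e. bound on the CHSH combination
  have hGle : ∀ᵐ ω ∂P,
      ((1:ℝ) * ((p 1 true ω - p (-1) true ω) * (q 1 true ω - q (-1) true ω))
      + (1:ℝ) * ((p 1 true ω - p (-1) true ω) * (q 1 false ω - q (-1) false ω))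
      + (-1:ℝ) * ((p 1 false ω - p (-1) false ω) * (q 1 true ω - q (-1) true ω))
      + (1:ℝ) * ((p 1 false ω - p (-1) false ω) * (q 1 false ω - q (-1) false ω))) ≤ 1/2 := by
    filter_upwards [hfacts1 true, hfacts1 false, hfacts2 true, hfacts2 false]
      with ω h1 h2 h3 h4
    obtain ⟨ha1, hb1, hs1⟩ := h1
    obtain ⟨ha2, hb2, hs2⟩ := h2
    obtain ⟨hc1, hd1, hs3⟩ := h3
    obtain ⟨hc2, hd2, hs4⟩ := h4
    have key := chsh_core (p 1 true ω - p (-1) true ω) (p 1 false ω - p (-1) false ω)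
      (q 1 true ω - q (-1) true ω) (q 1 false ω - q (-1) false ω)
      (by linarith) (by linarith) (by linarith) (by linarith)
      (by linarith) (by linarith) (by linarith) (by linarith)
    nlinarith [key]
  -- integrability of the CHSH combination
  have hG_int : Integrable (fun ω =>
      ((1:ℝ) * ((p 1 true ω - p (-1) true ω) * (q 1 true ω - q (-1) true ω))
      + (1:ℝ) * ((p 1 true ω - p (-1) true ω) * (q 1 false ω - q (-1) false ω))
      + (-1:ℝ) * ((p 1 false ω - p (-1) false ω) * (q 1 true ω - q (-1) true ω))
      + (1:ℝ) * ((p 1 false ω - p (-1) false ω) * (q 1 false ω - q (-1) false ω)))) P := by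
    have g1 : Integrable (fun ω => (1:ℝ) * ((p 1 true ω - p (-1) true ω) * (q 1 true ω - q (-1) true ω))) P := (hf_int true true).const_mul 1
    have g2 : Integrable (fun ω => (1:ℝ) * ((p 1 true ω - p (-1) true ω) * (q 1 false ω - q (-1) false ω))) P := (hf_int true false).const_mul 1
    have g3 : Integrable (fun ω => (-1:ℝ) * ((p 1 false ω - p (-1) false ω) * (q 1 true ω - q (-1) true ω))) P := (hf_int false true).const_mul (-1)
    have g4 : Integrable (fun ω => (1:ℝ) * ((p 1 false ω - p (-1) false ω) * (q 1 false ω - q (-1) false ω))) P := (hf_int false false).const_mul 1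
    exact ((g1.add g2).add g3).add g4
  -- conclusion: E[C] ≤ 1/2
  have hEC_half : ∫ ω, C ω ∂P ≤ 1/2 := by
    rw [hsplit]
    calc ∫ ω, ((1:ℝ) * ((p 1 true ω - p (-1) true ω) * (q 1 true ω - q (-1) true ω))
        + (1:ℝ) * ((p 1 true ω - p (-1) true ω) * (q 1 false ω - q (-1) false ω))
        + (-1:ℝ) * ((p 1 false ω - p (-1) false ω) * (q 1 true ω - q (-1) true ω))
        + (1:ℝ) * ((p 1 false ω - p (-1) false ω) * (q 1 false ω - q (-1) false ω))) ∂P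
        ≤ ∫ _ω, (1/2 : ℝ) ∂P := integral_mono_ae hG_int (integrable_const _) hGle
      _ = 1/2 := by simp
  -- measurability of C and the set {C = 1}
  have hCmeas : Measurable C := by
    have hCe : C = fun ω => if A ω = false ∧ B ω = true then -(D1 ω * D2 ω) else D1 ω * D2 ω :=
      funext hC
    rw [hCe]
    have hcond : MeasurableSet {ω | A ω = false ∧ B ω = true} := by
      have : {ω | A ω = false ∧ B ω = true} = A ⁻¹' {false} ∩ B ⁻¹' {true} := by ext ω; simp
      rw [this]
      exact (hA (measurableSet_singleton false)).inter (hB (measurableSet_singleton true))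
    exact Measurable.ite hcond (hD1.mul hD2).neg (hD1.mul hD2)
  have hmsC : MeasurableSet {ω | C ω = 1} := by
    have : {ω | C ω = 1} = C ⁻¹' {1} := by ext ω; simp
    rw [this]; exact hCmeas (measurableSet_singleton 1)
  have hCv : ∀ ω, C ω = 1 ∨ C ω = -1 := fun ω => by
    rcases hD1v ω with h1 | h1 <;> rcases hD2v ω with h2 | h2 <;>
      by_cases hx : A ω = false ∧ B ω = true <;>
      simp [hC, h1, h2, hx] <;> norm_num
  have hCind : ∀ ω, C ω = 2 * ({ω' | C ω' = 1}.indicator (fun _ => (1:ℝ)) ω) - 1 := fun ω => by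
    rcases hCv ω with h | h <;> simp [Set.indicator_apply, Set.mem_setOf_eq, h] <;> norm_num
  have hEC_eq : ∫ ω, C ω ∂P = 2 * (P {ω | C ω = 1}).toReal - 1 := by
    rw [integral_congr_ae (ae_of_all _ hCind)]
    have hii : Integrable (fun ω => 2 * ({ω' | C ω' = 1}.indicator (fun _ => (1:ℝ)) ω)) P :=
      ((integrable_const 1).indicator hmsC).const_mul 2
    rw [integral_sub hii (integrable_const 1), integral_const_mul,
      integral_indicator_const _ hmsC, integral_const]
    simp [measureReal_def]
  have htr : (P {ω | C ω = 1}).toReal ≤ 3/4 := by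
    rw [hEC_eq] at hEC_half; linarith
  refine ⟨?_, hEC_half⟩
  have h34 : ((3:ℝ≥0∞)/4).toReal = 3/4 := by
    rw [ENNReal.toReal_div]; norm_num
  refine (ENNReal.toReal_le_toReal (measure_ne_top P _) ?_).1 ?_
  · exact (ENNReal.div_lt_top (by norm_num) (by norm_num)).ne
  · rw [h34]; exact htr
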